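/- Let 0 < R < 1, let k be an integer with k > 1, and let f be measurable on (0,R) with ∫_0^R |f(r)|² |ln r|^k r dr < ∞. Define h(r) = ∫_0^r f(t) dt. Then ∫_0^R |h(r)|² |ln r|^{k-2} r⁻¹ dr ≤ C ∫_0^R |f(r)|² |ln r|^k r dr for a constant C depending only on k and R. -/

import Mathlib

open MeasureTheory Set
open scoped ENNReal

lemma expNeg_inj : Function.Injective (fun u : ℝ => Real.exp (-u)) :=
  fun a b h => neg_injective (Real.exp_injective h)

lemma expNeg_injOn (S : Set ℝ) : InjOn (fun u : ℝ => Real.exp (-u)) S :=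
  expNeg_inj.injOn

lemma expNeg_hasDeriv (S : Set ℝ) : ∀ x ∈ S,
    HasDerivWithinAt (fun u : ℝ => Real.exp (-u)) (-Real.exp (-x)) S x := by
  intro x _
  have h : HasDerivAt (fun u : ℝ => Real.exp (-u)) (Real.exp (-x) * (-1)) x :=
    (Real.hasDerivAt_exp (-x)).comp x (hasDerivAt_neg x)
  simpa [mul_neg_one] using h.hasDerivWithinAt

lemma expNeg_image_Ioi (b : ℝ) :
    (fun u : ℝ => Real.exp (-u)) '' Ioi b = Ioo 0 (Real.exp (-b)) := by
  ext t
  simp only [mem_image, mem_Ioi, mem_Ioo]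
  constructor
  · rintro ⟨u, hu, rfl⟩
    exact ⟨Real.exp_pos _, Real.exp_lt_exp.2 (by linarith)⟩
  · rintro ⟨ht0, ht1⟩
    refine ⟨-Real.log t, ?_, by rw [neg_neg, Real.exp_log ht0]⟩
    have := (Real.log_lt_iff_lt_exp ht0).2 ht1
    linarith

lemma expNeg_image_Ioo (b c : ℝ) :
    (fun u : ℝ => Real.exp (-u)) '' Ioo b c = Ioo (Real.exp (-c)) (Real.exp (-b)) := by
  ext t
  simp only [mem_image, mem_Ioo]
  constructor
  · rintro ⟨u, ⟨hu1, hu2⟩, rfl⟩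
    exact ⟨Real.exp_lt_exp.2 (by linarith), Real.exp_lt_exp.2 (by linarith)⟩
  · rintro ⟨ht0, ht1⟩
    have htpos : 0 < t := lt_trans (Real.exp_pos _) ht0
    refine ⟨-Real.log t, ⟨?_, ?_⟩, by rw [neg_neg, Real.exp_log htpos]⟩
    · have := (Real.log_lt_iff_lt_exp htpos).2 ht1; linarith
    · have := (Real.lt_log_iff_exp_lt htpos).2 ht0; linarith

lemma lint_inv_log {a r : ℝ} (ha : 1 < a) (hr0 : 0 < r) (hr1 : r < 1) :
    ∫⁻ t in Ioo (0:ℝ) r, ENNReal.ofReal (t⁻¹ * (-Real.log t) ^ (-a)) =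
      ENNReal.ofReal ((-Real.log r) ^ (1 - a) / (a - 1)) := by
  set b : ℝ := -Real.log r with hbdef
  have hb : 0 < b := by rw [hbdef]; linarith [Real.log_neg hr0 hr1]
  have hrb : Real.exp (-b) = r := by rw [hbdef, neg_neg, Real.exp_log hr0]
  set g : ℝ → ℝ := fun t => t⁻¹ * (-Real.log t) ^ (-a) with hgdef
  have himg : Ioo (0:ℝ) r = (fun u : ℝ => Real.exp (-u)) '' Ioi b := by
    rw [expNeg_image_Ioi, hrb]
  have hptw : ∀ u : ℝ, |(-Real.exp (-u))| • g (Real.exp (-u)) = u ^ (-a) := by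
    intro u
    have he : (0:ℝ) < Real.exp (-u) := Real.exp_pos _
    rw [hgdef, smul_eq_mul, abs_neg, abs_of_pos he]
    simp only [Real.log_exp, neg_neg]
    rw [← mul_assoc, mul_inv_cancel₀ (ne_of_gt he), one_mul]
  have hint2 : IntegrableOn (fun u : ℝ => u ^ (-a)) (Ioi b) :=
    integrableOn_Ioi_rpow_of_lt (by linarith) hb
  have hint : IntegrableOn g (Ioo 0 r) := by
    rw [himg, integrableOn_image_iff_integrableOn_abs_deriv_smul measurableSet_Ioi
      (expNeg_hasDeriv _) (expNeg_injOn _) g]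
    exact hint2.congr_fun (fun u _ => (hptw u).symm) measurableSet_Ioi
  have hval : ∫ t in Ioo (0:ℝ) r, g t = b ^ (1 - a) / (a - 1) := by
    rw [himg, integral_image_eq_integral_abs_deriv_smul measurableSet_Ioi
      (expNeg_hasDeriv _) (expNeg_injOn _) g]
    rw [show (fun u : ℝ => |(-Real.exp (-u))| • g (Real.exp (-u))) = fun u : ℝ => u ^ (-a)
      from funext hptw]
    rw [integral_Ioi_rpow_of_lt (by linarith) hb]
    have h1 : -a + 1 = 1 - a := by ring
    rw [h1]
    have hne1 : (1:ℝ) - a ≠ 0 := by intro h; linarith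
    have hne2 : a - 1 ≠ 0 := by intro h; linarith
    field_simp
    ring
  have hnn : 0 ≤ᵐ[volume.restrict (Ioo (0:ℝ) r)] g := by
    refine (ae_restrict_iff' measurableSet_Ioo).2 (Filter.Eventually.of_forall fun t ht => ?_)
    have hlog : 0 ≤ -Real.log t :=
      neg_nonneg.2 (Real.log_nonpos ht.1.le (le_of_lt (lt_trans ht.2 hr1)))
    exact mul_nonneg (inv_nonneg.2 ht.1.le) (Real.rpow_nonneg hlog _)
  rw [← ofReal_integral_eq_lintegral_ofReal hint hnn, hval]

lemma lint_log_upper {σ : ℝ} (hσ : 0 < σ) {t R : ℝ} (ht0 : 0 < t) (htR : t < R) (hR1 : R < 1) :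
    ∫⁻ r in Ioo t R, ENNReal.ofReal ((-Real.log r) ^ (σ - 1) * r⁻¹) ≤
      ENNReal.ofReal ((-Real.log t) ^ σ / σ) := by
  set c : ℝ := -Real.log R with hcdef
  set d : ℝ := -Real.log t with hddef
  have hc : 0 < c := by rw [hcdef]; linarith [Real.log_neg (lt_trans ht0 htR) hR1]
  have hcd : c < d := by
    rw [hcdef, hddef]; linarith [Real.log_lt_log ht0 htR]
  have hRc : Real.exp (-c) = R := by rw [hcdef, neg_neg, Real.exp_log (lt_trans ht0 htR)]
  have htd : Real.exp (-d) = t := by rw [hddef, neg_neg, Real.exp_log ht0]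
  set g : ℝ → ℝ := fun r => (-Real.log r) ^ (σ - 1) * r⁻¹ with hgdef
  have himg : Ioo t R = (fun u : ℝ => Real.exp (-u)) '' Ioo c d := by
    rw [expNeg_image_Ioo, hRc, htd]
  have hptw : ∀ u : ℝ, |(-Real.exp (-u))| • g (Real.exp (-u)) = u ^ (σ - 1) := by
    intro u
    have he : (0:ℝ) < Real.exp (-u) := Real.exp_pos _
    rw [hgdef, smul_eq_mul, abs_neg, abs_of_pos he]
    simp only [Real.log_exp, neg_neg]
    rw [mul_comm (u ^ (σ-1)) _, ← mul_assoc, mul_inv_cancel₀ (ne_of_gt he), one_mul]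
  have hint2 : IntegrableOn (fun u : ℝ => u ^ (σ - 1)) (Ioo c d) := by
    refine (ContinuousOn.integrableOn_Icc ?_).mono_set Ioo_subset_Icc_self
    exact ContinuousOn.rpow_const continuousOn_id fun x hx => Or.inl (ne_of_gt (lt_of_lt_of_le hc hx.1))
  have hint : IntegrableOn g (Ioo t R) := by
    rw [himg, integrableOn_image_iff_integrableOn_abs_deriv_smul measurableSet_Ioo
      (expNeg_hasDeriv _) (expNeg_injOn _) g]
    exact hint2.congr_fun (fun u _ => (hptw u).symm) measurableSet_Ioo
  have hval : ∫ r in Ioo t R, g r = (d ^ σ - c ^ σ) / σ := by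
    rw [himg, integral_image_eq_integral_abs_deriv_smul measurableSet_Ioo
      (expNeg_hasDeriv _) (expNeg_injOn _) g]
    rw [show (fun u : ℝ => |(-Real.exp (-u))| • g (Real.exp (-u))) = fun u : ℝ => u ^ (σ - 1)
      from funext hptw]
    rw [← MeasureTheory.integral_Ioc_eq_integral_Ioo,
      ← intervalIntegral.integral_of_le hcd.le,
      integral_rpow (Or.inr ⟨by intro h; exact absurd (by linarith : σ = 0) (ne_of_gt hσ), by
        intro h
        have := Set.mem_uIcc.1 h
        rcases this with ⟨h1, _⟩ | ⟨_, h2⟩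
        · linarith
        · linarith ⟩)]
    have : σ - 1 + 1 = σ := by ring
    rw [this]
  have hnn : 0 ≤ᵐ[volume.restrict (Ioo t R)] g := by
    refine (ae_restrict_iff' measurableSet_Ioo).2 (Filter.Eventually.of_forall fun r hr => ?_)
    have hlog : 0 ≤ -Real.log r :=
      neg_nonneg.2 (Real.log_nonpos (le_of_lt (lt_trans ht0 hr.1)) (le_of_lt (lt_trans hr.2 hR1)))
    exact mul_nonneg (Real.rpow_nonneg hlog _) (inv_nonneg.2 (le_of_lt (lt_trans ht0 hr.1)))
  rw [← ofReal_integral_eq_lintegral_ofReal hint hnn, hval]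
  apply ENNReal.ofReal_le_ofReal
  have h0 : 0 ≤ c ^ σ := Real.rpow_nonneg hc.le _
  gcongr
  linarith

lemma cs_aux {A : Set ℝ} (hA : MeasurableSet A) (f w : ℝ → ℝ) (hf : Measurable f)
    (hw : Measurable w) (hwpos : ∀ t ∈ A, 0 < w t) :
    ENNReal.ofReal ((∫ t in A, f t) ^ 2) ≤
      (∫⁻ t in A, ENNReal.ofReal ((f t) ^ 2 * w t)) *
        (∫⁻ t in A, ENNReal.ofReal (w t)⁻¹) := by
  by_cases hint : IntegrableOn f A volume
  · have h1 : |∫ t in A, f t| ≤ ∫ t in A, |f t| := by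
      simpa [Real.norm_eq_abs] using
        norm_integral_le_integral_norm (μ := volume.restrict A) (f := f)
    have h2 : (∫ t in A, f t) ^ 2 ≤ (∫ t in A, |f t|) ^ 2 := by
      rw [← sq_abs]
      exact pow_le_pow_left₀ (abs_nonneg _) h1 2
    refine le_trans (ENNReal.ofReal_le_ofReal h2) ?_
    have habsnn : (0:ℝ → ℝ) ≤ᵐ[volume.restrict A] fun t => |f t| :=
      Filter.Eventually.of_forall fun t => abs_nonneg _
    have h3 : ENNReal.ofReal ((∫ t in A, |f t|) ^ 2) =
        (∫⁻ t in A, ENNReal.ofReal |f t|) ^ 2 := by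
      rw [ENNReal.ofReal_pow (integral_nonneg fun t => abs_nonneg _),
        ofReal_integral_eq_lintegral_ofReal hint.abs habsnn]
    rw [h3]
    set φ : ℝ → ℝ≥0∞ := fun t => ENNReal.ofReal (|f t| * Real.sqrt (w t)) with hφdef
    set ψ : ℝ → ℝ≥0∞ := fun t => ENNReal.ofReal (Real.sqrt (w t))⁻¹ with hψdef
    have hφm : Measurable φ := by
      apply ENNReal.measurable_ofReal.comp
      exact (hf.abs.mul (hw.sqrt))
    have hψm : Measurable ψ := by
      apply ENNReal.measurable_ofReal.comp
      exact hw.sqrt.inv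
    have hprod : ∀ᵐ t ∂(volume.restrict A), ENNReal.ofReal |f t| = (φ * ψ) t := by
      refine (ae_restrict_iff' hA).2 (Filter.Eventually.of_forall fun t ht => ?_)
      have hwt : 0 < w t := hwpos t ht
      have hs : 0 < Real.sqrt (w t) := Real.sqrt_pos.2 hwt
      simp only [Pi.mul_apply, hφdef, hψdef]
      rw [← ENNReal.ofReal_mul (by positivity)]
      rw [mul_assoc, mul_inv_cancel₀ (ne_of_gt hs), mul_one]
    rw [lintegral_congr_ae hprod]
    have hconj : Real.HolderConjugate 2 2 := Real.HolderConjugate.two_two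
    have CS := ENNReal.lintegral_mul_le_Lp_mul_Lq (volume.restrict A) hconj
      hφm.aemeasurable hψm.aemeasurable
    have hsq : (∫⁻ t in A, (φ * ψ) t) ^ 2 ≤
        ((∫⁻ t in A, φ t ^ (2:ℝ)) ^ (1/(2:ℝ)) * (∫⁻ t in A, ψ t ^ (2:ℝ)) ^ (1/(2:ℝ))) ^ 2 :=
      pow_le_pow_left' CS 2
    refine hsq.trans ?_
    have hexp : ∀ X : ℝ≥0∞, (X ^ (1/(2:ℝ))) ^ (2:ℕ) = X := by
      intro X
      rw [← ENNReal.rpow_natCast (X ^ (1/(2:ℝ))) 2, ← ENNReal.rpow_mul]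
      norm_num
    rw [mul_pow, hexp, hexp]
    have e1 : ∫⁻ t in A, φ t ^ (2:ℝ) = ∫⁻ t in A, ENNReal.ofReal ((f t) ^ 2 * w t) := by
      refine setLIntegral_congr_fun hA (fun t ht => ?_)
      have hwt : 0 ≤ w t := (hwpos t ht).le
      show ENNReal.ofReal (|f t| * Real.sqrt (w t)) ^ (2:ℝ) = _
      rw [ENNReal.ofReal_rpow_of_nonneg (by positivity) (by norm_num)]
      congr 1
      rw [Real.rpow_two, mul_pow, sq_abs, Real.sq_sqrt hwt]
    have e2 : ∫⁻ t in A, ψ t ^ (2:ℝ) = ∫⁻ t in A, ENNReal.ofReal (w t)⁻¹ := by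
      refine setLIntegral_congr_fun hA (fun t ht => ?_)
      have hwt : 0 ≤ w t := (hwpos t ht).le
      show ENNReal.ofReal (Real.sqrt (w t))⁻¹ ^ (2:ℝ) = _
      rw [ENNReal.ofReal_rpow_of_nonneg (by positivity) (by norm_num)]
      congr 1
      rw [Real.rpow_two, inv_pow, Real.sq_sqrt hwt]
    rw [e1, e2]
  · rw [integral_undef hint]
    simp

lemma swap_aux {F G : ℝ → ℝ≥0∞} (hF : Measurable F) (hG : Measurable G) (R : ℝ) :
    ∫⁻ r in Ioo (0:ℝ) R, G r * ∫⁻ t in Ioo (0:ℝ) r, F t =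
      ∫⁻ t in Ioo (0:ℝ) R, F t * ∫⁻ r in Ioo t R, G r := by
  set μ := volume.restrict (Ioo (0:ℝ) R) with hμdef
  set H : ℝ × ℝ → ℝ≥0∞ := fun p => if p.2 < p.1 then G p.1 * F p.2 else 0 with hHdef
  have hHm : Measurable H :=
    Measurable.ite (measurableSet_lt measurable_snd measurable_fst)
      ((hG.comp measurable_fst).mul (hF.comp measurable_snd)) measurable_const
  have left : ∀ r ∈ Ioo (0:ℝ) R, ∫⁻ t, H (r, t) ∂μ = G r * ∫⁻ t in Ioo (0:ℝ) r, F t := by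
    intro r hr
    have hfun : (fun t => H (r, t)) = (Iio r).indicator (fun t => G r * F t) := by
      funext t
      by_cases h : t < r <;> simp [hHdef, indicator, mem_Iio, h]
    rw [hfun, lintegral_indicator measurableSet_Iio, hμdef,
      Measure.restrict_restrict measurableSet_Iio]
    have hset : Iio r ∩ Ioo (0:ℝ) R = Ioo (0:ℝ) r := by
      ext x
      simp only [mem_inter_iff, mem_Iio, mem_Ioo]
      constructor
      · rintro ⟨h1, h2, _⟩; exact ⟨h2, h1⟩
      · rintro ⟨h1, h2⟩; exact ⟨h2, h1, lt_trans h2 hr.2⟩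
    rw [hset, lintegral_const_mul _ hF]
  have right : ∀ t ∈ Ioo (0:ℝ) R, ∫⁻ r, H (r, t) ∂μ = F t * ∫⁻ r in Ioo t R, G r := by
    intro t ht
    have hfun : (fun r => H (r, t)) = (Ioi t).indicator (fun r => G r * F t) := by
      funext r
      by_cases h : t < r <;> simp [hHdef, indicator, mem_Ioi, h]
    rw [hfun, lintegral_indicator measurableSet_Ioi, hμdef,
      Measure.restrict_restrict measurableSet_Ioi]
    have hset : Ioi t ∩ Ioo (0:ℝ) R = Ioo t R := by
      ext x
      simp only [mem_inter_iff, mem_Ioi, mem_Ioo]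
      constructor
      · rintro ⟨h1, _, h3⟩; exact ⟨h1, h3⟩
      · rintro ⟨h1, h2⟩; exact ⟨h1, lt_trans ht.1 h1, h2⟩
    rw [hset, lintegral_mul_const _ hG, mul_comm]
  calc ∫⁻ r in Ioo (0:ℝ) R, G r * ∫⁻ t in Ioo (0:ℝ) r, F t
      = ∫⁻ r, (∫⁻ t, H (r, t) ∂μ) ∂μ :=
        (setLIntegral_congr_fun measurableSet_Ioo
          (fun r hr => (left r hr).symm))
    _ = ∫⁻ t, (∫⁻ r, H (r, t) ∂μ) ∂μ :=
        lintegral_lintegral_swap hHm.aemeasurable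
    _ = ∫⁻ t in Ioo (0:ℝ) R, F t * ∫⁻ r in Ioo t R, G r :=
        (setLIntegral_congr_fun measurableSet_Ioo
          (fun t ht => right t ht))

lemma pointwise_bound (f : ℝ → ℝ) (hf : Measurable f) {s : ℝ} (hs : 0 < s) {r : ℝ}
    (hr0 : 0 < r) (hr1 : r < 1) :
    ENNReal.ofReal ((∫ t in Ioo (0:ℝ) r, f t) ^ 2) ≤
      (∫⁻ t in Ioo (0:ℝ) r, ENNReal.ofReal ((f t) ^ 2 * (t * (-Real.log t) ^ (s+1)))) *
        ENNReal.ofReal ((-Real.log r) ^ (-s) / s) := by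
  set w : ℝ → ℝ := fun t => t * (-Real.log t) ^ (s+1) with hwdef
  have hwm : Measurable w := by measurability
  have hwpos : ∀ t ∈ Ioo (0:ℝ) r, 0 < w t := by
    intro t ht
    have hlog : 0 < -Real.log t := by
      have := Real.log_neg ht.1 (lt_trans ht.2 hr1); linarith
    exact mul_pos ht.1 (Real.rpow_pos_of_pos hlog _)
  refine (cs_aux measurableSet_Ioo f w hf hwm hwpos).trans ?_
  refine mul_le_mul_right (le_of_eq ?_) _
  have hcongr : ∫⁻ t in Ioo (0:ℝ) r, ENNReal.ofReal (w t)⁻¹ =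
      ∫⁻ t in Ioo (0:ℝ) r, ENNReal.ofReal (t⁻¹ * (-Real.log t) ^ (-(s+1))) := by
    refine setLIntegral_congr_fun measurableSet_Ioo
      (fun t ht => ?_)
    have hlog : 0 ≤ -Real.log t := by
      have := Real.log_neg ht.1 (lt_trans ht.2 hr1); linarith
    congr 1
    rw [hwdef, mul_inv, ← Real.rpow_neg hlog]
  rw [hcongr, lint_inv_log (by linarith : 1 < s + 1) hr0 hr1]
  congr 2 <;> ring

set_option maxHeartbeats 1000000 in
theorem weighted_hardy_log_kgt_one
    (R : ℝ) (hR0 : 0 < R) (hR1 : R < 1) (k : ℤ) (hk : 1 < k) :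
    ∃ C : ℝ, 0 < C ∧
      ∀ f : ℝ → ℝ, Measurable f →
        (∫⁻ r in Ioo (0 : ℝ) R,
            ENNReal.ofReal ((f r) ^ 2 * |Real.log r| ^ k * r)) < ⊤ →
        (∫⁻ r in Ioo (0 : ℝ) R,
            ENNReal.ofReal ((∫ t in Ioo (0 : ℝ) r, f t) ^ 2 * |Real.log r| ^ (k - 2) / r)) ≤
          ENNReal.ofReal C *
            ∫⁻ r in Ioo (0 : ℝ) R,
              ENNReal.ofReal ((f r) ^ 2 * |Real.log r| ^ k * r) := by
  have hK : 2 ≤ (k:ℝ) := by exact_mod_cast hk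
  set K : ℝ := (k : ℝ) with hKdef
  set s : ℝ := (K - 1) / 2 with hsdef
  have hs : 0 < s := by rw [hsdef]; linarith
  refine ⟨s⁻¹ * s⁻¹, by positivity, ?_⟩
  intro f hf _
  set F : ℝ → ℝ≥0∞ := fun t => ENNReal.ofReal ((f t) ^ 2 * (t * (-Real.log t) ^ (s+1)))
    with hFdef
  set G : ℝ → ℝ≥0∞ := fun r => ENNReal.ofReal ((-Real.log r) ^ (s-1) * r⁻¹) with hGdef
  have hFm : Measurable F := by
    rw [hFdef]; measurability
  have hGm : Measurable G := by
    rw [hGdef]; measurability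
  have step1 : ∀ r ∈ Ioo (0:ℝ) R,
      ENNReal.ofReal ((∫ t in Ioo (0:ℝ) r, f t) ^ 2 * |Real.log r| ^ (k - 2) / r) ≤
        ENNReal.ofReal s⁻¹ * (G r * ∫⁻ t in Ioo (0:ℝ) r, F t) := by
    intro r hr
    have hr1 : r < 1 := lt_trans hr.2 hR1
    have hlogneg : Real.log r < 0 := Real.log_neg hr.1 hr1
    have hL : 0 < -Real.log r := by linarith
    have habs : |Real.log r| = -Real.log r := abs_of_neg hlogneg
    have hzpow : |Real.log r| ^ (k - 2) = (-Real.log r) ^ (K - 2) := by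
      rw [habs, show K - 2 = ((k - 2 : ℤ) : ℝ) by push_cast [hKdef]; ring,
        Real.rpow_intCast]
    have hsplit : (∫ t in Ioo (0:ℝ) r, f t) ^ 2 * |Real.log r| ^ (k - 2) / r
        = (∫ t in Ioo (0:ℝ) r, f t) ^ 2 * ((-Real.log r) ^ (K - 2) / r) := by
      rw [hzpow]; ring
    rw [hsplit, ENNReal.ofReal_mul (sq_nonneg _)]
    have hCS := pointwise_bound f hf hs hr.1 hr1
    calc ENNReal.ofReal ((∫ t in Ioo (0:ℝ) r, f t) ^ 2) *
          ENNReal.ofReal ((-Real.log r) ^ (K-2) / r)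
        ≤ ((∫⁻ t in Ioo (0:ℝ) r, F t) * ENNReal.ofReal ((-Real.log r) ^ (-s) / s)) *
            ENNReal.ofReal ((-Real.log r) ^ (K-2) / r) := mul_le_mul_left hCS _
      _ = (∫⁻ t in Ioo (0:ℝ) r, F t) *
            ENNReal.ofReal (((-Real.log r) ^ (-s) / s) * ((-Real.log r) ^ (K-2) / r)) := by
          rw [mul_assoc, ENNReal.ofReal_mul (by positivity)]
      _ = ENNReal.ofReal s⁻¹ * (G r * ∫⁻ t in Ioo (0:ℝ) r, F t) := by
          have hLKs : (-Real.log r) ^ (-s) * (-Real.log r) ^ (K-2) =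
              (-Real.log r) ^ (s-1) := by
            rw [← Real.rpow_add hL]
            congr 1
            rw [hsdef]; ring
          have e : ((-Real.log r) ^ (-s) / s) * ((-Real.log r) ^ (K-2) / r) =
              s⁻¹ * (((-Real.log r) ^ (-s) * (-Real.log r) ^ (K-2)) * r⁻¹) := by
            ring
          rw [e, hLKs, ENNReal.ofReal_mul (by positivity), hGdef]
          ring
  calc (∫⁻ r in Ioo (0 : ℝ) R,
          ENNReal.ofReal ((∫ t in Ioo (0 : ℝ) r, f t) ^ 2 * |Real.log r| ^ (k - 2) / r))
      ≤ ∫⁻ r in Ioo (0:ℝ) R,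
          ENNReal.ofReal s⁻¹ * (G r * ∫⁻ t in Ioo (0:ℝ) r, F t) :=
        lintegral_mono_ae ((ae_restrict_iff' measurableSet_Ioo).2
          (Filter.Eventually.of_forall step1))
    _ = ENNReal.ofReal s⁻¹ * ∫⁻ r in Ioo (0:ℝ) R, G r * ∫⁻ t in Ioo (0:ℝ) r, F t :=
        lintegral_const_mul' _ _ ENNReal.ofReal_ne_top
    _ = ENNReal.ofReal s⁻¹ * ∫⁻ t in Ioo (0:ℝ) R, F t * ∫⁻ r in Ioo t R, G r := by
        rw [swap_aux hFm hGm R]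
    _ ≤ ENNReal.ofReal s⁻¹ *
          ∫⁻ t in Ioo (0:ℝ) R, F t * ENNReal.ofReal ((-Real.log t) ^ s / s) := by
        refine mul_le_mul_right (lintegral_mono_ae ((ae_restrict_iff' measurableSet_Ioo).2
          (Filter.Eventually.of_forall fun t ht => ?_))) _
        exact mul_le_mul_right (lint_log_upper hs ht.1 ht.2 hR1) _
    _ = ENNReal.ofReal s⁻¹ * (ENNReal.ofReal s⁻¹ *
          ∫⁻ t in Ioo (0:ℝ) R, ENNReal.ofReal ((f t) ^ 2 * |Real.log t| ^ k * t)) := by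
        congr 1
        rw [← lintegral_const_mul' (ENNReal.ofReal s⁻¹) _ ENNReal.ofReal_ne_top]
        refine setLIntegral_congr_fun measurableSet_Ioo
          (fun t ht => ?_)
        have ht1 : t < 1 := lt_trans ht.2 hR1
        have hlt : Real.log t < 0 := Real.log_neg ht.1 ht1
        have hL : 0 < -Real.log t := by linarith
        have habs : |Real.log t| = -Real.log t := abs_of_neg hlt
        have hz : |Real.log t| ^ k = (-Real.log t) ^ K := by
          rw [habs, hKdef, Real.rpow_intCast]
        have hnn1 : (0:ℝ) ≤ (f t) ^ 2 * (t * (-Real.log t) ^ (s+1)) :=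
          mul_nonneg (sq_nonneg _) (mul_nonneg ht.1.le (Real.rpow_nonneg hL.le _))
        have hnn2 : (0:ℝ) ≤ (f t) ^ 2 * |Real.log t| ^ k * t := by
          rw [hz]
          exact mul_nonneg (mul_nonneg (sq_nonneg _) (Real.rpow_nonneg hL.le _)) ht.1.le
        rw [hFdef]
        show ENNReal.ofReal ((f t) ^ 2 * (t * (-Real.log t) ^ (s+1))) *
            ENNReal.ofReal ((-Real.log t) ^ s / s) = _
        rw [← ENNReal.ofReal_mul hnn1, ← ENNReal.ofReal_mul (inv_nonneg.2 hs.le)]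
        congr 1
        rw [hz]
        have hpow : (-Real.log t) ^ (s+1) * (-Real.log t) ^ s = (-Real.log t) ^ K := by
          rw [← Real.rpow_add hL]
          congr 1
          rw [hsdef]; ring
        calc (f t) ^ 2 * (t * (-Real.log t) ^ (s+1)) * ((-Real.log t) ^ s / s)
            = s⁻¹ * ((f t) ^ 2 * ((-Real.log t) ^ (s+1) * (-Real.log t) ^ s) * t) := by
              ring
          _ = s⁻¹ * ((f t) ^ 2 * (-Real.log t) ^ K * t) := by rw [hpow]
    _ = ENNReal.ofReal (s⁻¹ * s⁻¹) *
          ∫⁻ t in Ioo (0:ℝ) R, ENNReal.ofReal ((f t) ^ 2 * |Real.log t| ^ k * t) := by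
        rw [← mul_assoc, ← ENNReal.ofReal_mul (inv_nonneg.2 hs.le)]
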